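/- arXiv:2505.05548 — 4 statements merged into one kernel-verified Lean document; each statement's English description precedes it below -/
import Mathlib

section
/- Under the dynamics γ_{k+1} = γ_k + δ·g·(ñ(s_k)·cos(0) − cos γ_k)/v_k with ñ(s_k) = cos γ_k + (1/g)·min(λ·v_k·(γ_max−γ_k)/δ, α(s_k)), the pitch update satisfies γ_k ≤ γ_{k+1} ≤ γ_k + λ·(γ_max − γ_k) whenever γ_k ≤ γ_max, v_k ≥ v_min > 0, n_max > 1, γ_max > 0, λ ∈ (0,1], δ > 0, g > 0. -/
theorem stmt_5 (vmin nmax γmax δ g lam vk γk : ℝ)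
    (hγ : γk ≤ γmax) (hv : vk ≥ vmin) (hvmin : vmin > 0) (hnmax : nmax > 1)
    (hγmax : γmax > 0) (hlam0 : 0 < lam) (hlam1 : lam ≤ 1) (hδ : δ > 0) (hg : g > 0)
    (α ntil γk1 : ℝ)
    (hα : α = min (γmax * lam * vk / δ) (g * nmax - g))
    (hntil : ntil = Real.cos γk + (1 / g) * min (lam * vk * (γmax - γk) / δ) α)
    (hdyn : γk1 = γk + δ * g * (ntil * Real.cos 0 - Real.cos γk) / vk) :
    γk ≤ γk1 ∧ γk1 ≤ γk + lam * (γmax - γk) := by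
  have hvk : (0:ℝ) < vk := lt_of_lt_of_le hvmin hv
  have hgn : g ≠ 0 := ne_of_gt hg
  have hkey : γk1 = γk + δ * min (lam * vk * (γmax - γk) / δ) α / vk := by
    rw [hdyn, hntil, Real.cos_zero]
    field_simp
    ring
  set m := min (lam * vk * (γmax - γk) / δ) α with hm
  have hα0 : 0 ≤ α := by
    rw [hα]
    apply le_min
    · positivity
    · nlinarith
  have hm0 : 0 ≤ m := le_min (div_nonneg (mul_nonneg (mul_nonneg hlam0.le hvk.le) (by linarith)) hδ.le) hα0
  constructor
  · rw [hkey]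
    have : 0 ≤ δ * m / vk := div_nonneg (mul_nonneg hδ.le hm0) hvk.le
    linarith
  · rw [hkey]
    have h1 : m ≤ lam * vk * (γmax - γk) / δ := min_le_left _ _
    have h2 : δ * m / vk ≤ lam * (γmax - γk) := by
      rw [div_le_iff₀ hvk]
      calc δ * m ≤ δ * (lam * vk * (γmax - γk) / δ) := by nlinarith
        _ = lam * (γmax - γk) * vk := by field_simp
    linarith
end

section
/- Let α > 0, v > 0, δ > 0, γ < 0 with γ ≤ −δ·α/v, z, z_min ∈ ℝ. Set τ = −γ·v/α, γ' = γ + δ·α/v, τ' = τ − δ, z' = z + δ·v·sin γ. Then z' + v·γ'·(τ' + δ) − z_min ≥ z + v·γ·(τ + δ) − z_min. That is, b_5 is nondecreasing along the safe maneuver when pitch stays negative. -/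
theorem stmt_8 (α v δ γ z zmin : ℝ) (hα : α > 0) (hv : v > 0) (hδ : δ > 0)
    (hγ : γ < 0) (hγ2 : γ ≤ -δ * α / v) :
    (z + δ * v * Real.sin γ) + v * (γ + δ * α / v) * ((-γ * v / α - δ) + δ) - zmin ≥
      z + v * γ * (-γ * v / α + δ) - zmin := by
  have hs : γ < Real.sin γ := by
    have := Real.sin_lt (x := -γ) (by linarith)
    rw [Real.sin_neg] at this; linarith
  have hα' : α ≠ 0 := ne_of_gt hα
  have hv' : v ≠ 0 := ne_of_gt hv
  field_simp
  refine le_of_mul_le_mul_left ?_ hα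
  nlinarith [mul_pos (mul_pos (mul_pos hδ hv) (show Real.sin γ - 2*γ > 0 by linarith)) (mul_pos hα hα)]
end

section
/- Let α > 0, v > 0, δ > 0, −δ·α/v < γ < 0, z, z_min ∈ ℝ, and τ = −γ·v/α. Then 0 < τ < δ, the updated pitch γ' = γ + δ·α/v satisfies γ' ≥ 0, and z + δ·v·sin γ − z_min ≥ z + (δ + τ)·v·γ − z_min. -/
theorem stmt_9 (α v δ γ z zmin : ℝ) (hα : α > 0) (hv : v > 0) (hδ : δ > 0)
    (hγl : -δ * α / v < γ) (hγ : γ < 0) :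
    (0 < -γ * v / α ∧ -γ * v / α < δ) ∧ γ + δ * α / v ≥ 0 ∧
      z + δ * v * Real.sin γ - zmin ≥ z + (δ + -γ * v / α) * v * γ - zmin := by
  have hng : 0 < -γ := by linarith
  have hτ : 0 < -γ * v / α := by positivity
  have hγl' : -(δ * α) < γ * v := by
    have := (div_lt_iff₀ hv).mp hγl
    linarith
  have hτδ : -γ * v / α < δ := by
    rw [div_lt_iff₀ hα]; nlinarith
  have hsin : γ < Real.sin γ := by
    have := Real.sin_lt (x := -γ) (by linarith)
    rw [Real.sin_neg] at this; linarith
  refine ⟨⟨hτ, hτδ⟩, ?_, ?_⟩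
  · have : -(δ * α / v) < γ := by rw [← neg_div, ← neg_mul]; exact hγl
    have h2 : 0 < δ * α / v := by positivity
    linarith
  · have h1 : δ * v * γ ≤ δ * v * Real.sin γ :=
      mul_le_mul_of_nonneg_left hsin.le (by positivity)
    have h2 : (-γ * v / α) * v * γ ≤ 0 := by
      apply mul_nonpos_of_nonneg_of_nonpos
      · positivity
      · linarith
    nlinarith
end

section
/- Suppose b_i(s) ≥ 0 for i = 1,…,5 implies s ∈ S, the safe control ũ(s) ∈ U whenever b_i(s) ≥ 0 for i = 1,…,4, and b_i(f(s, ũ(s))) − (1−λ)·b_i(s) ≥ 0 for i = 1,…,5 whenever all b_i(s) ≥ 0. Then h(s) = min_{i=1,…,5} b_i(s) is a DT-ECBF on {s : h(s) ≥ 0}, and any trajectory starting with h(s_0) ≥ 0 and controlled by ũ remains in S for all time. -/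
/-- `h` is a DT-ECBF on `D` for dynamics `f`, control set `U`, rate `lam`. -/
def IsDTECBF {S C : Type*} (f : S → C → S) (U : Set C) (lam : ℝ)
    (h : S → ℝ) (D : Set S) : Prop :=
  ∀ s ∈ D, ∃ u ∈ U, h (f s u) - (1 - lam) * h s ≥ 0

lemma inf_le_b {S' : Type*} (b : Fin 5 → S' → ℝ) (s : S') (i : Fin 5) :
    (⨅ j, b j s) ≤ b i s :=
  ciInf_le (Set.Finite.bddBelow (Set.finite_range _)) i

theorem stmt_19 {S' C : Type*} (f : S' → C → S') (U : Set C) (lam : ℝ)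
    (hlam0 : 0 < lam) (hlam1 : lam ≤ 1)
    (b : Fin 5 → S' → ℝ) (Ssafe : Set S')
    (utilde : S' → C)
    (h : S' → ℝ) (hh : ∀ s, h s = ⨅ i, b i s)
    (hSafe : ∀ s, (∀ i, b i s ≥ 0) → s ∈ Ssafe)
    (hU : ∀ s, (∀ i : Fin 5, i.val < 4 → b i s ≥ 0) → utilde s ∈ U)
    (hDec : ∀ s, (∀ i, b i s ≥ 0) → ∀ i, b i (f s (utilde s)) - (1 - lam) * b i s ≥ 0) :
    IsDTECBF f U lam h {s | h s ≥ 0} ∧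
      ∀ s : ℕ → S', (∀ k, s (k + 1) = f (s k) (utilde (s k))) → h (s 0) ≥ 0 →
        ∀ k, s k ∈ Ssafe := by
  have hpos : ∀ s : S', h s ≥ 0 → ∀ i, b i s ≥ 0 := fun s hs i =>
    le_trans (by rw [hh] at hs; exact hs) (inf_le_b b s i)
  have hstep : ∀ s : S', h s ≥ 0 → h (f s (utilde s)) - (1 - lam) * h s ≥ 0 := by
    intro s hs
    have hb := hpos s hs
    have hd := hDec s hb
    have : (1 - lam) * h s ≤ ⨅ i, b i (f s (utilde s)) := by
      apply le_ciInf
      intro i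
      have h1 : (1 - lam) * h s ≤ (1 - lam) * b i s := by
        apply mul_le_mul_of_nonneg_left _ (by linarith)
        rw [hh]; exact inf_le_b b s i
      linarith [hd i]
    rw [hh]; linarith
  constructor
  · intro s hs
    refine ⟨utilde s, hU s (fun i _ => hpos s hs i), hstep s hs⟩
  · intro s hdyn h0 k
    have hk : ∀ k, h (s k) ≥ 0 := by
      intro k
      induction k with
      | zero => exact h0
      | succ n ih =>
        have := hstep (s n) ih
        rw [hdyn n]
        nlinarith [mul_nonneg (by linarith : (0:ℝ) ≤ 1 - lam) ih]
    exact hSafe (s k) (hpos (s k) (hk k))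
end
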